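/- For n ≥ 3, a Gaussian random vector X ~ N_n(μ, Σ) is never counter-monotonic unless at least n − 2 of its components are degenerate (a.s. constant). -/

import Mathlib

open MeasureTheory ProbabilityTheory

def IsGaussianVec {Ω : Type*} [MeasurableSpace Ω] (P : Measure Ω) {n : ℕ}
    (X : Fin n → Ω → ℝ) (μv : Fin n → ℝ) (S : Matrix (Fin n) (Fin n) ℝ) : Prop :=
  ∀ t : Fin n → ℝ, Measure.map (fun ω => ∑ i, t i * X i ω) P
    = gaussianReal (∑ i, t i * μv i) (Real.toNNReal (∑ i, ∑ j, t i * S i j * t j))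

lemma gauss_sym_aux (μ : ℝ) (v : NNReal) :
    (gaussianReal μ v).map (fun x => 2*μ + (-1) * x) = gaussianReal μ v := by
  have h1 : (gaussianReal μ v).map ((-1 : ℝ) * ·) = gaussianReal (-μ) v := by
    rw [gaussianReal_map_const_mul]
    congr 1
    · ring
    · ext; simp
  have h2 : (gaussianReal (-μ) v).map ((2*μ) + ·) = gaussianReal μ v := by
    rw [gaussianReal_map_const_add]; ring_nf
  calc (gaussianReal μ v).map (fun x => 2*μ + (-1) * x)
      = (gaussianReal μ v).map (((2*μ) + ·) ∘ ((-1 : ℝ) * ·)) := by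
        congr 1
    _ = ((gaussianReal μ v).map ((-1 : ℝ) * ·)).map ((2*μ) + ·) :=
        (Measure.map_map (by fun_prop) (by fun_prop)).symm
    _ = gaussianReal μ v := by rw [h1, h2]

lemma gauss_Ioi_half_aux (μ : ℝ) {v : NNReal} (hv : v ≠ 0) :
    gaussianReal μ v (Set.Ioi μ) = 1/2 := by
  have hsing : gaussianReal μ v {μ} = 0 :=
    (gaussianReal_absolutelyContinuous μ hv) (measure_singleton μ)
  have hsym : gaussianReal μ v (Set.Ioi μ) = gaussianReal μ v (Set.Iio μ) := by
    conv_lhs => rw [← gauss_sym_aux μ v]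
    rw [Measure.map_apply (by fun_prop) measurableSet_Ioi]
    congr 1
    ext x
    simp only [Set.mem_preimage, Set.mem_Ioi, Set.mem_Iio]
    constructor <;> intro h <;> nlinarith
  have huniv : gaussianReal μ v (Set.Iio μ) + gaussianReal μ v (Set.Ioi μ) = 1 := by
    rw [← measure_union ((Set.Iio_disjoint_Ici le_rfl).mono_right Set.Ioi_subset_Ici_self)
      measurableSet_Ioi,
      Set.Iio_union_Ioi, measure_compl (measurableSet_singleton μ) (measure_ne_top _ _), hsing,
      measure_univ, tsub_zero]
  rw [← hsym] at huniv
  have h2 : (2 : ENNReal) * gaussianReal μ v (Set.Ioi μ) = 1 := by rw [two_mul]; exact huniv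
  exact (ENNReal.eq_div_iff (two_ne_zero) (ENNReal.ofNat_ne_top)).mpr h2

/-- For `n ≥ 3`, a Gaussian vector is never counter-monotonic unless at least `n - 2`
of its components are degenerate (a.s. constant). -/
theorem stmt10 {Ω : Type*} [MeasurableSpace Ω] (P : Measure Ω) [IsProbabilityMeasure P]
    {n : ℕ} (hn : 3 ≤ n) (X : Fin n → Ω → ℝ) (hmeas : ∀ i, Measurable (X i))
    (μv : Fin n → ℝ) (S : Matrix (Fin n) (Fin n) ℝ) (hS : S.PosSemidef)
    (hG : IsGaussianVec P X μv S)
    (hCT : ∀ i j, i ≠ j → ∃ (Z : Ω → ℝ) (f g : ℝ → ℝ), Measurable Z ∧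
      Monotone f ∧ Monotone g ∧ ∀ᵐ ω ∂P, X i ω = f (Z ω) ∧ X j ω = -(g (Z ω))) :
    ∃ i j : Fin n, ∀ k, k ≠ i → k ≠ j → ∃ c : ℝ, ∀ᵐ ω ∂P, X k ω = c := by
  -- marginal laws
  have hmarg : ∀ i, Measure.map (X i) P = gaussianReal (μv i) (Real.toNNReal (S i i)) := by
    intro i
    have h := hG (fun j => if j = i then 1 else 0)
    have e1 : (fun ω => ∑ j, (if j = i then 1 else 0) * X j ω) = X i := by
      funext ω
      simp [ite_mul, Finset.sum_ite_eq']
    have e2 : (∑ j, (if j = i then 1 else 0) * μv j) = μv i := by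
      simp [ite_mul, Finset.sum_ite_eq']
    have e3 : (∑ j, ∑ k, (if j = i then 1 else 0) * S j k * (if k = i then 1 else 0))
        = S i i := by
      simp [ite_mul, mul_ite, Finset.sum_ite_eq']
    rw [e1, e2, e3] at h
    exact h
  -- degenerate components
  have hdeg : ∀ i, Real.toNNReal (S i i) = 0 → ∀ᵐ ω ∂P, X i ω = μv i := by
    intro i h0
    have hm := hmarg i
    rw [h0, gaussianReal_zero_var] at hm
    have : P (X i ⁻¹' {μv i}ᶜ) = 0 := by
      rw [← Measure.map_apply (hmeas i) (measurableSet_singleton (μv i)).compl, hm,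
        Measure.dirac_apply' _ (measurableSet_singleton (μv i)).compl]
      simp
    rw [ae_iff]
    convert this using 2
    ext; simp
  -- non-degenerate components have median μv i
  have hhalf : ∀ i, Real.toNNReal (S i i) ≠ 0 → P {ω | μv i < X i ω} = 1/2 := by
    intro i h0
    have : P {ω | μv i < X i ω} = Measure.map (X i) P (Set.Ioi (μv i)) := by
      rw [Measure.map_apply (hmeas i) measurableSet_Ioi]
      rfl
    rw [this, hmarg i, gauss_Ioi_half_aux _ h0]
  -- counter-monotone pairs of non-degenerate components have null joint upper quadrant
  have hpair : ∀ i j, i ≠ j → Real.toNNReal (S i i) ≠ 0 → Real.toNNReal (S j j) ≠ 0 →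
      P ({ω | μv i < X i ω} ∩ {ω | μv j < X j ω}) = 0 := by
    intro i j hij hvi hvj
    obtain ⟨Z, f, g, hZ, hf, hg, hae⟩ := hCT i j hij
    set U : Set ℝ := f ⁻¹' (Set.Ioi (μv i)) with hUdef
    set L : Set ℝ := g ⁻¹' (Set.Iio (-(μv j))) with hLdef
    have hUmeas : MeasurableSet U := hf.measurable measurableSet_Ioi
    have hLmeas : MeasurableSet L := hg.measurable measurableSet_Iio
    have hseq : ({ω | μv i < X i ω} ∩ {ω | μv j < X j ω} : Set Ω)
        =ᵐ[P] ((Z ⁻¹' U ∩ Z ⁻¹' L : Set Ω)) := by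
      filter_upwards [hae] with ω h
      change (μv i < X i ω ∧ μv j < X j ω) = (μv i < f (Z ω) ∧ g (Z ω) < -(μv j))
      rw [h.1, h.2, eq_iff_iff]
      constructor
      · rintro ⟨h1, h2⟩; exact ⟨h1, by linarith⟩
      · rintro ⟨h1, h2⟩; exact ⟨h1, by linarith⟩
    have hseqU : ({ω | μv i < X i ω} : Set Ω) =ᵐ[P] (Z ⁻¹' U) := by
      filter_upwards [hae] with ω h
      change (μv i < X i ω) = (μv i < f (Z ω))
      rw [h.1]
    have hseqL : ({ω | μv j < X j ω} : Set Ω) =ᵐ[P] (Z ⁻¹' L) := by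
      filter_upwards [hae] with ω h
      change (μv j < X j ω) = (g (Z ω) < -(μv j))
      rw [h.2, eq_iff_iff]
      constructor <;> intro <;> linarith
    rw [measure_congr hseq]
    rcases Set.eq_empty_or_nonempty (U ∩ L) with hUL | ⟨z0, hz0U, hz0L⟩
    · have : Z ⁻¹' U ∩ Z ⁻¹' L = ∅ := by
        rw [← Set.preimage_inter, hUL, Set.preimage_empty]
      rw [this, measure_empty]
    · -- U ∪ L = univ
      have hcup : Z ⁻¹' U ∪ Z ⁻¹' L = Set.univ := by
        rw [← Set.preimage_union]
        have : U ∪ L = Set.univ := by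
          ext x
          simp only [Set.mem_union, Set.mem_univ, iff_true]
          rcases le_total z0 x with h | h
          · exact Or.inl (lt_of_lt_of_le hz0U (hf h))
          · exact Or.inr (lt_of_le_of_lt (hg h) hz0L)
        rw [this, Set.preimage_univ]
      have key := measure_union_add_inter (μ := P) (Z ⁻¹' U) (hZ hLmeas)
      rw [hcup, measure_univ, ← measure_congr hseqU, ← measure_congr hseqL,
        hhalf i hvi, hhalf j hvj] at key
      have h12 : (1 : ENNReal)/2 + 1/2 = 1 := by
        rw [ENNReal.div_add_div_same, one_add_one_eq_two, ENNReal.div_self two_ne_zero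
          ENNReal.ofNat_ne_top]
      rw [h12] at key
      have : (1 : ENNReal) + P (Z ⁻¹' U ∩ Z ⁻¹' L) = 1 + 0 := by rw [add_zero, key]
      exact (ENNReal.add_right_inj ENNReal.one_ne_top).mp this
  -- main argument
  by_contra hcon
  push_neg at hcon
  have hnd : ∀ i j : Fin n, ∃ k, k ≠ i ∧ k ≠ j ∧ Real.toNNReal (S k k) ≠ 0 := by
    intro i j
    obtain ⟨k, hki, hkj, hk⟩ := hcon i j
    exact ⟨k, hki, hkj, fun h0 => hk (μv k) ((hdeg k h0).mono fun _ h hne => hne h)⟩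
  obtain ⟨i, -, -, hi⟩ := hnd ⟨0, by omega⟩ ⟨0, by omega⟩
  obtain ⟨j, hji, -, hj⟩ := hnd i i
  obtain ⟨k, hki, hkj, hk⟩ := hnd i j
  set A := {ω | μv i < X i ω}
  set B := {ω | μv j < X j ω}
  set C := {ω | μv k < X k ω}
  have hAmeas : MeasurableSet A := measurableSet_lt measurable_const (hmeas i)
  have hBmeas : MeasurableSet B := measurableSet_lt measurable_const (hmeas j)
  have hAB : P (A ∩ B) = 0 := hpair i j (Ne.symm hji) hi hj
  have hAC : P (A ∩ C) = 0 := hpair i k (Ne.symm hki) hi hk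
  have hBC : P (B ∩ C) = 0 := hpair j k (Ne.symm hkj) hj hk
  -- P (A ∪ B) = 1
  have hABu : P (A ∪ B) = 1 := by
    have key := measure_union_add_inter (μ := P) A hBmeas
    rw [hAB, add_zero, hhalf i hi, hhalf j hj] at key
    rw [key, ENNReal.div_add_div_same, one_add_one_eq_two, ENNReal.div_self two_ne_zero
      ENNReal.ofNat_ne_top]
  have hcompl : P ((A ∪ B)ᶜ) = 0 := by
    rw [measure_compl (hAmeas.union hBmeas) (measure_ne_top _ _), hABu, measure_univ, tsub_self]
  have hsub : C ⊆ (A ∩ C) ∪ (B ∩ C) ∪ (A ∪ B)ᶜ := by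
    intro ω hω
    by_cases hA : ω ∈ A
    · exact Or.inl (Or.inl ⟨hA, hω⟩)
    by_cases hB : ω ∈ B
    · exact Or.inl (Or.inr ⟨hB, hω⟩)
    · exact Or.inr (fun h => h.elim hA hB)
  have hC0 : P C = 0 := by
    refine le_antisymm ?_ zero_le
    calc P C ≤ P ((A ∩ C) ∪ (B ∩ C) ∪ (A ∪ B)ᶜ) := measure_mono hsub
      _ ≤ P ((A ∩ C) ∪ (B ∩ C)) + P ((A ∪ B)ᶜ) := measure_union_le _ _
      _ ≤ P (A ∩ C) + P (B ∩ C) + P ((A ∪ B)ᶜ) := by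
          gcongr; exact measure_union_le _ _
      _ = 0 := by rw [hAC, hBC, hcompl]; simp
  rw [hhalf k hk] at hC0
  norm_num at hC0
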